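/- arXiv:1605.01371 — 3 statements merged into one kernel-verified Lean document; each statement's English description precedes it below -/
import Mathlib

section
/- (Lucas) If p is a prime dividing the Fermat number F_n = 2^(2^n) + 1 with n ≥ 2, then p ≡ 1 (mod 2^(n+2)). -/
lemma aux_two_pow_dvd_sub_one {p : ℕ} (hp : p.Prime) (m : ℕ) (x : ZMod p)
    (h1 : x ^ 2 ^ (m + 1) = 1) (h2 : x ^ 2 ^ m ≠ 1) : 2 ^ (m + 1) ∣ p - 1 := by
  haveI := Fact.mk hp
  have hx : x ≠ 0 := by
    rintro rfl
    rw [zero_pow (by positivity)] at h1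
    exact zero_ne_one h1
  have hord : orderOf x ∣ 2 ^ (m + 1) := orderOf_dvd_of_pow_eq_one h1
  obtain ⟨k, hk, hkeq⟩ := (Nat.dvd_prime_pow Nat.prime_two).mp hord
  have hk' : k = m + 1 := by
    by_contra h
    have hkm : k ≤ m := by omega
    exact h2 (orderOf_dvd_iff_pow_eq_one.mp (hkeq ▸ pow_dvd_pow 2 hkm))
  have : orderOf x ∣ p - 1 :=
    orderOf_dvd_of_pow_eq_one (ZMod.pow_card_sub_one_eq_one hx)
  rwa [hkeq, hk'] at this

theorem lucas_fermat_divisor (n p : ℕ) (hn : 2 ≤ n) (hp : p.Prime)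
    (hdvd : p ∣ 2 ^ 2 ^ n + 1) : p % 2 ^ (n + 2) = 1 := by
  haveI := Fact.mk hp
  have hp2 : p ≠ 2 := by
    rintro rfl
    have : 2 ∣ 2 ^ 2 ^ n := dvd_pow_self 2 (by positivity)
    omega
  have hplt : 2 < p := lt_of_le_of_ne hp.two_le (Ne.symm hp2)
  haveI : Fact (2 < p) := ⟨hplt⟩
  -- in ZMod p, 2^(2^n) = -1
  have hz : (2 : ZMod p) ^ 2 ^ n = -1 := by
    have h0 : ((2 ^ 2 ^ n + 1 : ℕ) : ZMod p) = 0 :=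
      (ZMod.natCast_eq_zero_iff _ _).mpr hdvd
    push_cast at h0
    linear_combination h0
  have hne1 : (-1 : ZMod p) ≠ 1 := ZMod.neg_one_ne_one
  -- order of 2 is 2^(n+1), so 2^(n+1) ∣ p - 1
  have hd1 : 2 ^ (n + 1) ∣ p - 1 := by
    apply aux_two_pow_dvd_sub_one hp n 2
    · rw [pow_succ, pow_mul, hz]; ring
    · rw [hz]; exact hne1
  -- hence p ≡ 1 mod 8
  have h8 : p % 8 = 1 := by
    have h8d : (8 : ℕ) ∣ p - 1 := dvd_trans ⟨2 ^ (n - 2), by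
      rw [show (8 : ℕ) = 2 ^ 3 from rfl, ← pow_add]; congr 1; omega⟩ hd1
    have := hp.two_le
    omega
  -- 2 is a square mod p
  obtain ⟨a, ha⟩ := (ZMod.exists_sq_eq_two_iff hp2).mpr (by omega)
  have ha2 : a * a = 2 := ha.symm
  have hd2 : 2 ^ (n + 2) ∣ p - 1 := by
    apply aux_two_pow_dvd_sub_one hp (n + 1) a
    · have : a ^ 2 ^ (n + 2) = (a * a) ^ 2 ^ (n + 1) := by
        rw [← pow_two, ← pow_mul, ← pow_succ']
      rw [this, ha2, pow_succ, pow_mul, hz]; ring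
    · have : a ^ 2 ^ (n + 1) = (a * a) ^ 2 ^ n := by
        rw [← pow_two, ← pow_mul, ← pow_succ']
      rw [this, ha2, hz]; exact hne1
  obtain ⟨c, hc⟩ := hd2
  have h16 : 16 ≤ 2 ^ (n + 2) := by
    calc (16 : ℕ) = 2 ^ 4 := by norm_num
    _ ≤ 2 ^ (n + 2) := Nat.pow_le_pow_right (by norm_num) (by omega)
  have := hp.two_le
  have : p = 2 ^ (n + 2) * c + 1 := by omega
  rw [this]
  rw [Nat.mul_add_mod, Nat.mod_eq_of_lt (by omega)]
end

section
/- Every prime divisor of the Fermat number F_n with n ≥ 2 is of the form k·2^(n+2) + 1 for some positive integer k. -/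
theorem fermat_divisor_form (n p : ℕ) (hn : 2 ≤ n) (hp : p.Prime)
    (hdvd : p ∣ 2 ^ 2 ^ n + 1) : ∃ k : ℕ, 0 < k ∧ p = k * 2 ^ (n + 2) + 1 := by
  obtain ⟨k, hk⟩ := Nat.fermat_primeFactors_one_lt n p (by omega) hp hdvd
  refine ⟨k, ?_, hk⟩
  rcases Nat.eq_zero_or_pos k with rfl | h
  · simp at hk; exact absurd (hk ▸ hp) Nat.not_prime_one
  · exact h
end

section
/- If p is an odd prime dividing a Fermat number F_n with n ≥ 2, then 2 is a quadratic residue modulo p. -/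
theorem two_is_qr_mod_fermat_divisor (n p : ℕ) (hn : 2 ≤ n) (hp : p.Prime)
    (hodd : Odd p) (hdvd : p ∣ 2 ^ 2 ^ n + 1) : IsSquare (2 : ZMod p) := by
  haveI : Fact p.Prime := ⟨hp⟩
  have hp2 : p ≠ 2 := by rintro rfl; exact (by norm_num : ¬ Odd 2) hodd
  have hplt : 2 < p := lt_of_le_of_ne hp.two_le (Ne.symm hp2)
  haveI : Fact (2 < p) := ⟨hplt⟩
  have h0 : ((2 ^ 2 ^ n + 1 : ℕ) : ZMod p) = 0 :=
    (ZMod.natCast_eq_zero_iff _ _).mpr hdvd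
  push_cast at h0
  have h1 : (2 : ZMod p) ^ 2 ^ n = -1 := by linear_combination h0
  have hne : (2 : ZMod p) ^ 2 ^ n ≠ 1 := by
    rw [h1]; exact ZMod.neg_one_ne_one
  have hpow : (2 : ZMod p) ^ 2 ^ (n + 1) = 1 := by
    rw [pow_succ, pow_mul, h1]; ring
  have hord : orderOf (2 : ZMod p) = 2 ^ (n + 1) := orderOf_eq_prime_pow hne hpow
  have h2ne : (2 : ZMod p) ≠ 0 := by
    intro h
    have hd : p ∣ 2 := (ZMod.natCast_eq_zero_iff 2 p).mp (by exact_mod_cast h)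
    have := Nat.le_of_dvd (by norm_num) hd
    omega
  have hdvd1 : 2 ^ (n + 1) ∣ p - 1 := hord ▸ ZMod.orderOf_dvd_card_sub_one h2ne
  have h8 : 8 ∣ p - 1 := dvd_trans (by
    have : (2 : ℕ) ^ 3 ∣ 2 ^ (n + 1) := pow_dvd_pow 2 (by omega)
    simpa using this) hdvd1
  exact (ZMod.exists_sq_eq_two_iff hp2).mpr (Or.inl (by omega))
end
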